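/- arXiv:1807.04005 — 7 statements merged into one kernel-verified Lean document; each statement's English description precedes it below -/
import Mathlib

section
/- Let p, q > 0 and r ∈ (0,4). Define the sequence t_0 = 1, t_k = (p + sqrt(q + r·t_{k-1}²))/2. Then t_k converges to (2p + Δ)/(4 - r), where Δ = sqrt(r·p² + (4-r)·q). -/
theorem fista_t_limit_r_lt_four (p q r : ℝ) (hp : 0 < p) (hq : 0 < q)
    (hr0 : 0 < r) (hr4 : r < 4) (t : ℕ → ℝ) (ht0 : t 0 = 1)
    (hrec : ∀ k, t (k + 1) = (p + Real.sqrt (q + r * (t k) ^ 2)) / 2) :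
    Filter.Tendsto t Filter.atTop
      (nhds ((2 * p + Real.sqrt (r * p ^ 2 + (4 - r) * q)) / (4 - r))) := by
  have h4r : 0 < 4 - r := by linarith
  set Δ : ℝ := Real.sqrt (r * p ^ 2 + (4 - r) * q) with hΔdef
  set L : ℝ := (2 * p + Δ) / (4 - r) with hLdef
  have hΔ0 : 0 ≤ Δ := Real.sqrt_nonneg _
  have hΔsq : Δ ^ 2 = r * p ^ 2 + (4 - r) * q := Real.sq_sqrt (by positivity)
  have h2Lp : 0 ≤ 2 * L - p := by
    have h : 2 * L - p = (r * p + 2 * Δ) / (4 - r) := by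
      rw [hLdef]; field_simp; ring
    rw [h]; positivity
  have hfix : Real.sqrt (q + r * L ^ 2) = 2 * L - p := by
    have hsq : q + r * L ^ 2 = (2 * L - p) ^ 2 := by
      rw [hLdef]
      field_simp
      nlinarith [hΔsq]
    rw [hsq, Real.sqrt_sq h2Lp]
  have hsr : Real.sqrt r ^ 2 = r := Real.sq_sqrt hr0.le
  have hsr0 : 0 ≤ Real.sqrt r := Real.sqrt_nonneg r
  -- one-sided Lipschitz bound for the sqrt part
  have hlip : ∀ x y : ℝ,
      Real.sqrt (q + r * x ^ 2) - Real.sqrt (q + r * y ^ 2) ≤ Real.sqrt r * |x - y| := by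
    intro x y
    have hy : Real.sqrt r * |y| ≤ Real.sqrt (q + r * y ^ 2) := by
      have h1 : Real.sqrt r * |y| = Real.sqrt (r * y ^ 2) := by
        rw [Real.sqrt_mul hr0.le, Real.sqrt_sq_eq_abs]
      rw [h1]
      exact Real.sqrt_le_sqrt (by linarith)
    have hS : Real.sqrt (q + r * y ^ 2) ^ 2 = q + r * y ^ 2 :=
      Real.sq_sqrt (by positivity)
    have hkey : Real.sqrt (q + r * x ^ 2)
        ≤ Real.sqrt (q + r * y ^ 2) + Real.sqrt r * |x - y| := by
      have hmul := mul_le_mul_of_nonneg_right hy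
        (by positivity : (0:ℝ) ≤ Real.sqrt r * |x - y|)
      calc Real.sqrt (q + r * x ^ 2)
          ≤ Real.sqrt ((Real.sqrt (q + r * y ^ 2) + Real.sqrt r * |x - y|) ^ 2) := by
            apply Real.sqrt_le_sqrt
            nlinarith [sq_abs (x - y), sq_abs y, le_abs_self (y * (x - y)),
              abs_mul y (x - y), abs_nonneg (x - y), abs_nonneg y]
        _ = Real.sqrt (q + r * y ^ 2) + Real.sqrt r * |x - y| := by
            apply Real.sqrt_sq; positivity
    linarith
  -- contraction step
  have hstep : ∀ k, |t (k + 1) - L| ≤ Real.sqrt r / 2 * |t k - L| := by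
    intro k
    have hfL : L = (p + Real.sqrt (q + r * L ^ 2)) / 2 := by rw [hfix]; ring
    have h1 : t (k + 1) - L
        = (Real.sqrt (q + r * (t k) ^ 2) - Real.sqrt (q + r * L ^ 2)) / 2 := by
      rw [hrec k, hfix]; ring
    rw [h1]
    rw [abs_div, abs_of_nonneg (by norm_num : (0:ℝ) ≤ (2:ℝ))]
    rw [div_le_iff₀ (by norm_num : (0:ℝ) < 2)]
    rw [abs_sub_le_iff]
    constructor
    · have := hlip (t k) L
      nlinarith [abs_nonneg (t k - L)]
    · have := hlip L (t k)
      rw [abs_sub_comm] at this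
      nlinarith [abs_nonneg (t k - L)]
  set c : ℝ := Real.sqrt r / 2 with hcdef
  have hc0 : 0 ≤ c := by positivity
  have hc1 : c < 1 := by
    have : Real.sqrt r < 2 := by
      have h2 : Real.sqrt r < Real.sqrt 4 := Real.sqrt_lt_sqrt hr0.le hr4
      have h4 : Real.sqrt 4 = 2 := by
        rw [show (4:ℝ) = 2 ^ 2 by norm_num, Real.sqrt_sq (by norm_num : (0:ℝ) ≤ 2)]
      linarith
    rw [hcdef]; linarith
  have hbound : ∀ k, |t k - L| ≤ |t 0 - L| * c ^ k := by
    intro k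
    induction k with
    | zero => simp
    | succ n ih =>
      calc |t (n + 1) - L| ≤ c * |t n - L| := hstep n
        _ ≤ c * (|t 0 - L| * c ^ n) := by
            exact mul_le_mul_of_nonneg_left ih hc0
        _ = |t 0 - L| * c ^ (n + 1) := by ring
  rw [tendsto_iff_dist_tendsto_zero]
  have hlim : Filter.Tendsto (fun k : ℕ => |t 0 - L| * c ^ k) Filter.atTop (nhds 0) := by
    have := tendsto_pow_atTop_nhds_zero_of_lt_one hc0 hc1
    simpa using this.const_mul (|t 0 - L|)
  exact squeeze_zero (fun k => dist_nonneg)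
    (fun k => by simpa [Real.dist_eq] using hbound k) hlim
end

section
/- Let p, q > 0 and r ∈ (0,4). Define t_0 = 1, t_k = (p + sqrt(q + r·t_{k-1}²))/2 and a_k = (t_{k-1} - 1)/t_k. Then a_k converges to 1 - (4 - r)/(2p + Δ), where Δ = sqrt(r·p² + (4-r)·q). -/
open Filter

private lemma fista_sqrt_one_side (q r : ℝ) (hq : 0 < q) (hr0 : 0 < r)
    {x y : ℝ} (hx : 0 ≤ x) (hy : 0 ≤ y) (hxy : y ≤ x) :
    Real.sqrt (q + r * x ^ 2) - Real.sqrt (q + r * y ^ 2) ≤ Real.sqrt r * (x - y) := by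
  set s := Real.sqrt r with hs_def
  have hs : 0 ≤ s := Real.sqrt_nonneg r
  have hs2 : s ^ 2 = r := Real.sq_sqrt hr0.le
  set sB := Real.sqrt (q + r * y ^ 2) with hsB_def
  have hsBnn : 0 ≤ sB := Real.sqrt_nonneg _
  have hsB2 : sB ^ 2 = q + r * y ^ 2 := Real.sq_sqrt (by positivity)
  have hsBy : s * y ≤ sB := by
    have h1 : Real.sqrt (r * y ^ 2) ≤ sB := Real.sqrt_le_sqrt (by linarith)
    have h2 : Real.sqrt (r * y ^ 2) = s * y := by
      rw [Real.sqrt_mul hr0.le, Real.sqrt_sq hy]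
    linarith [h2 ▸ h1]
  have hR : 0 ≤ sB + s * (x - y) := by
    have := mul_nonneg hs (sub_nonneg.2 hxy); linarith
  have key : Real.sqrt (q + r * x ^ 2) ≤ sB + s * (x - y) := by
    have h : q + r * x ^ 2 ≤ (sB + s * (x - y)) ^ 2 := by
      nlinarith [mul_nonneg (mul_nonneg hs (sub_nonneg.2 hxy)) (sub_nonneg.2 hsBy)]
    calc Real.sqrt (q + r * x ^ 2) ≤ Real.sqrt ((sB + s * (x - y)) ^ 2) :=
          Real.sqrt_le_sqrt h
      _ = sB + s * (x - y) := Real.sqrt_sq hR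
  linarith

private lemma fista_lip (q r : ℝ) (hq : 0 < q) (hr0 : 0 < r)
    {x y : ℝ} (hx : 0 ≤ x) (hy : 0 ≤ y) :
    |Real.sqrt (q + r * x ^ 2) - Real.sqrt (q + r * y ^ 2)| ≤ Real.sqrt r * |x - y| := by
  rcases le_total y x with h | h
  · have h1 := fista_sqrt_one_side q r hq hr0 hx hy h
    have h2 : Real.sqrt (q + r * y ^ 2) ≤ Real.sqrt (q + r * x ^ 2) :=
      Real.sqrt_le_sqrt (by nlinarith [pow_le_pow_left₀ hy h 2])
    rw [abs_of_nonneg (by linarith), abs_of_nonneg (by linarith)]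
    linarith
  · have h1 := fista_sqrt_one_side q r hq hr0 hy hx h
    have h2 : Real.sqrt (q + r * x ^ 2) ≤ Real.sqrt (q + r * y ^ 2) :=
      Real.sqrt_le_sqrt (by nlinarith [pow_le_pow_left₀ hx h 2])
    rw [abs_of_nonpos (by linarith), abs_of_nonpos (by linarith)]
    linarith

theorem fista_a_limit_r_lt_four (p q r : ℝ) (hp : 0 < p) (hq : 0 < q)
    (hr0 : 0 < r) (hr4 : r < 4) (t a : ℕ → ℝ) (ht0 : t 0 = 1)
    (hrec : ∀ k, t (k + 1) = (p + Real.sqrt (q + r * (t k) ^ 2)) / 2)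
    (ha : ∀ k, a (k + 1) = (t k - 1) / t (k + 1)) :
    Filter.Tendsto a Filter.atTop
      (nhds (1 - (4 - r) / (2 * p + Real.sqrt (r * p ^ 2 + (4 - r) * q)))) := by
  have h4r : 0 < 4 - r := by linarith
  set D := Real.sqrt (r * p ^ 2 + (4 - r) * q) with hD_def
  have hDnn : 0 ≤ D := Real.sqrt_nonneg _
  have hD2 : D ^ 2 = r * p ^ 2 + (4 - r) * q := Real.sq_sqrt (by positivity)
  have hDpos : 0 < D := by
    rw [hD_def]; exact Real.sqrt_pos.2 (by positivity)
  set T := (2 * p + D) / (4 - r) with hT_def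
  have hTpos : 0 < T := by
    apply div_pos (by linarith) h4r
  -- fixed point
  have hfix : (p + Real.sqrt (q + r * T ^ 2)) / 2 = T := by
    have h2Tp : 0 ≤ 2 * T - p := by
      have : 2 * T - p = (r * p + 2 * D) / (4 - r) := by
        rw [hT_def]; field_simp; ring
      rw [this]; positivity
    have hsq : (2 * T - p) ^ 2 = q + r * T ^ 2 := by
      rw [hT_def]
      field_simp
      nlinarith [hD2]
    have : Real.sqrt (q + r * T ^ 2) = 2 * T - p := by
      rw [← hsq, Real.sqrt_sq h2Tp]
    rw [this]; ring
  -- c = sqrt r / 2 < 1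
  set c := Real.sqrt r / 2 with hc_def
  have hc0 : 0 ≤ c := by positivity
  have hc1 : c < 1 := by
    have : Real.sqrt r < 2 := by
      rw [show (2:ℝ) = Real.sqrt 4 by
        rw [show (4:ℝ) = 2^2 by norm_num, Real.sqrt_sq (by norm_num)]]
      exact Real.sqrt_lt_sqrt hr0.le hr4
    rw [hc_def]; linarith
  -- t k nonneg
  have htnn : ∀ k, 0 ≤ t k := by
    intro k
    cases k with
    | zero => rw [ht0]; norm_num
    | succ n =>
      rw [hrec n]
      positivity
  -- contraction bound
  have hbound : ∀ k, |t k - T| ≤ c ^ k * |1 - T| := by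
    intro k
    induction k with
    | zero => simp [ht0]
    | succ n ih =>
      have hstep : |t (n + 1) - T| ≤ c * |t n - T| := by
        rw [hrec n]
        nth_rewrite 1 [← hfix]
        have : (p + Real.sqrt (q + r * t n ^ 2)) / 2 - (p + Real.sqrt (q + r * T ^ 2)) / 2
            = (Real.sqrt (q + r * t n ^ 2) - Real.sqrt (q + r * T ^ 2)) / 2 := by ring
        rw [this, abs_div]
        have := fista_lip q r hq hr0 (htnn n) hTpos.le
        rw [hc_def]
        rw [abs_of_nonneg (by norm_num : (0:ℝ) ≤ 2)]
        linarith
      calc |t (n + 1) - T| ≤ c * |t n - T| := hstep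
        _ ≤ c * (c ^ n * |1 - T|) := by
            exact mul_le_mul_of_nonneg_left ih hc0
        _ = c ^ (n + 1) * |1 - T| := by ring
  -- t tends to T
  have htT : Tendsto t atTop (nhds T) := by
    rw [tendsto_iff_norm_sub_tendsto_zero]
    have h0 : Tendsto (fun k => c ^ k * |1 - T|) atTop (nhds 0) := by
      have := (tendsto_pow_atTop_nhds_zero_of_lt_one hc0 hc1).mul_const |1 - T|
      simpa using this
    apply squeeze_zero (fun k => norm_nonneg _) _ h0
    intro k
    rw [Real.norm_eq_abs]
    exact hbound k
  have htT1 : Tendsto (fun k => t (k + 1)) atTop (nhds T) :=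
    htT.comp (tendsto_add_atTop_nat 1)
  have hTne : T ≠ 0 := ne_of_gt hTpos
  have hlim : Tendsto (fun k => (t k - 1) / t (k + 1)) atTop (nhds ((T - 1) / T)) :=
    (htT.sub_const 1).div htT1 hTne
  have hval : (T - 1) / T = 1 - (4 - r) / (2 * p + D) := by
    have h2pD : (2 * p + D) ≠ 0 := by positivity
    rw [hT_def]
    field_simp
  have haux : Tendsto (fun k => a (k + 1)) atTop
      (nhds (1 - (4 - r) / (2 * p + D))) := by
    rw [← hval]
    have : (fun k => a (k + 1)) = fun k => (t k - 1) / t (k + 1) := by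
      funext k; exact ha k
    rw [this]
    exact hlim
  exact (tendsto_add_atTop_iff_nat 1).mp haux
end

section
/- Let p, q > 0. Define t_0 = 1, t_k = (p + sqrt(q + 4·t_{k-1}²))/2 and a_k = (t_{k-1} - 1)/t_k. Then a_k converges to 1. -/
theorem fista_a_tendsto_one (p q : ℝ) (hp : 0 < p) (hq : 0 < q)
    (t a : ℕ → ℝ) (ht0 : t 0 = 1)
    (hrec : ∀ k, t (k + 1) = (p + Real.sqrt (q + 4 * (t k) ^ 2)) / 2)
    (ha : ∀ k, a (k + 1) = (t k - 1) / t (k + 1)) :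
    Filter.Tendsto a Filter.atTop (nhds 1) := by
  have hC : ∃ C : ℝ, C = (p + Real.sqrt q) / 2 + 1 := ⟨_, rfl⟩
  obtain ⟨C, hC⟩ := hC
  -- basic sqrt facts per k
  have hs_sq : ∀ k, (Real.sqrt (q + 4 * (t k) ^ 2)) ^ 2 = q + 4 * (t k) ^ 2 := by
    intro k
    exact Real.sq_sqrt (by positivity)
  have hgap_lo : ∀ k, t k + p / 2 ≤ t (k + 1) := by
    intro k
    have h1 := hs_sq k
    have h2 := Real.sqrt_nonneg (q + 4 * (t k) ^ 2)
    rw [hrec k]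
    nlinarith [sq_nonneg (Real.sqrt (q + 4 * (t k) ^ 2) - 2 * t k),
      sq_nonneg (Real.sqrt (q + 4 * (t k) ^ 2) + 2 * t k)]
  have ht1 : ∀ k, 1 ≤ t k := by
    intro k
    induction k with
    | zero => simp [ht0]
    | succ n ih =>
      have := hgap_lo n
      nlinarith
  have hgap_hi : ∀ k, t (k + 1) ≤ t k + (p + Real.sqrt q) / 2 := by
    intro k
    have h1 := hs_sq k
    have h2 := Real.sqrt_nonneg q
    have h3 := Real.sq_sqrt hq.le
    have h4 := ht1 k
    have key : Real.sqrt (q + 4 * (t k) ^ 2) ≤ 2 * t k + Real.sqrt q := by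
      nlinarith [Real.sqrt_nonneg (q + 4 * (t k) ^ 2)]
    rw [hrec k]; linarith
  -- t tends to infinity
  have hlin : ∀ k : ℕ, 1 + (k : ℝ) * (p / 2) ≤ t k := by
    intro k
    induction k with
    | zero => simp [ht0]
    | succ n ih =>
      have := hgap_lo n
      push_cast
      nlinarith
  have htend : Filter.Tendsto t Filter.atTop Filter.atTop := by
    apply Filter.tendsto_atTop_mono hlin
    apply Filter.tendsto_atTop_add_const_left
    exact Filter.Tendsto.atTop_mul_const (half_pos hp) tendsto_natCast_atTop_atTop
  have htend1 : Filter.Tendsto (fun k => t (k + 1)) Filter.atTop Filter.atTop :=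
    htend.comp (Filter.tendsto_add_atTop_nat 1)
  have hpos : ∀ k, 0 < t (k + 1) := fun k => lt_of_lt_of_le one_pos (ht1 (k + 1))
  -- squeeze
  have hupper : ∀ k, a (k + 1) ≤ 1 := by
    intro k
    rw [ha k, div_le_one (hpos k)]
    have := hgap_lo k
    have := ht1 k
    linarith
  have hlower : ∀ k, 1 - C / t (k + 1) ≤ a (k + 1) := by
    intro k
    rw [ha k]
    have hp1 := hpos k
    have heq : 1 - C / t (k + 1) = (t (k + 1) - C) / t (k + 1) := by
      field_simp
    rw [heq, div_le_div_iff_of_pos_right hp1]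
    have := hgap_hi k
    linarith [hC]
  have hltend : Filter.Tendsto (fun k => 1 - C / t (k + 1)) Filter.atTop (nhds 1) := by
    have h0 : Filter.Tendsto (fun k => C / t (k + 1)) Filter.atTop (nhds 0) :=
      Filter.Tendsto.div_atTop tendsto_const_nhds htend1
    have := (tendsto_const_nhds : Filter.Tendsto (fun _ : ℕ => (1 : ℝ)) Filter.atTop (nhds 1)).sub h0
    simpa using this
  have hshift : Filter.Tendsto (fun k => a (k + 1)) Filter.atTop (nhds 1) := by
    refine tendsto_of_tendsto_of_tendsto_of_le_of_le hltend tendsto_const_nhds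
      (fun k => hlower k) (fun k => hupper k)
  exact (Filter.tendsto_add_atTop_iff_nat 1).mp hshift
end

section
/- Let r > 4 and define t_0 = 1, t_k = (1 + sqrt(1 + r·t_{k-1}²))/2, a_k = (t_{k-1} - 1)/t_k. Then t_k → +∞ and a_k converges to 2/sqrt(r). -/
open Filter Real

theorem fista_r_gt_four (r : ℝ) (hr : 4 < r) (t a : ℕ → ℝ) (ht0 : t 0 = 1)
    (hrec : ∀ k, t (k + 1) = (1 + Real.sqrt (1 + r * (t k) ^ 2)) / 2)
    (ha : ∀ k, a (k + 1) = (t k - 1) / t (k + 1)) :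
    Filter.Tendsto t Filter.atTop Filter.atTop ∧
      Filter.Tendsto a Filter.atTop (nhds (2 / Real.sqrt r)) := by
  have hr0 : (0:ℝ) < r := by linarith
  have hsr : (2:ℝ) < Real.sqrt r := by
    rw [show (2:ℝ) = Real.sqrt 4 by
      rw [show (4:ℝ) = 2^2 by norm_num, Real.sqrt_sq (by norm_num : (0:ℝ) ≤ 2)]]
    exact Real.sqrt_lt_sqrt (by norm_num) hr
  set q : ℝ := Real.sqrt r / 2 with hq
  have hq1 : 1 < q := by rw [hq]; linarith
  have hlb : ∀ k, q ^ k ≤ t k := by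
    intro k
    induction k with
    | zero => simp [ht0]
    | succ k ih =>
      have hqk : (0:ℝ) < q ^ k := pow_pos (by linarith) k
      have htk : 0 < t k := lt_of_lt_of_le hqk ih
      have hs : Real.sqrt r * t k ≤ Real.sqrt (1 + r * t k ^ 2) := by
        rw [show Real.sqrt r * t k = Real.sqrt (r * t k ^ 2) by
          rw [Real.sqrt_mul hr0.le, Real.sqrt_sq htk.le]]
        exact Real.sqrt_le_sqrt (by nlinarith)
      rw [hrec]
      have h2 : q * t k ≤ (1 + Real.sqrt (1 + r * t k ^ 2)) / 2 := by
        rw [hq]; nlinarith [hs]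
      calc q ^ (k+1) = q * q ^ k := by ring
        _ ≤ q * t k := by nlinarith
        _ ≤ _ := h2
  have htT : Tendsto t atTop atTop :=
    tendsto_atTop_mono hlb (tendsto_pow_atTop_atTop_of_one_lt hq1)
  refine ⟨htT, ?_⟩
  set F : ℝ → ℝ := fun x => (x - 1) / ((1 + Real.sqrt (1 + r * x ^ 2)) / 2) with hF
  have hFlim : Tendsto F atTop (nhds (2 / Real.sqrt r)) := by
    have h1 : Tendsto (fun x : ℝ => x⁻¹) atTop (nhds 0) := tendsto_inv_atTop_zero
    have hnum : Tendsto (fun x : ℝ => 2 - 2 * x⁻¹) atTop (nhds 2) := by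
      have := (h1.const_mul 2)
      have h2 := tendsto_const_nhds (x := (2:ℝ)) (f := (atTop : Filter ℝ))
      simpa using h2.sub this
    have hden : Tendsto (fun x : ℝ => x⁻¹ + Real.sqrt (x⁻¹ ^ 2 + r)) atTop
        (nhds (Real.sqrt r)) := by
      have hin : Tendsto (fun x : ℝ => x⁻¹ ^ 2 + r) atTop (nhds r) := by
        have := (h1.pow 2).add (tendsto_const_nhds (x := r) (f := (atTop : Filter ℝ)))
        simpa using this
      have hsq : Tendsto (fun x : ℝ => Real.sqrt (x⁻¹ ^ 2 + r)) atTop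
          (nhds (Real.sqrt r)) :=
        (Real.continuous_sqrt.tendsto r).comp hin
      simpa using h1.add hsq
    have hG : Tendsto (fun x : ℝ => (2 - 2 * x⁻¹) / (x⁻¹ + Real.sqrt (x⁻¹ ^ 2 + r)))
        atTop (nhds (2 / Real.sqrt r)) :=
      hnum.div hden (by positivity)
    refine hG.congr' ?_
    filter_upwards [eventually_ge_atTop (1:ℝ)] with x hx
    have hx0 : (0:ℝ) < x := by linarith
    have hs0 : (0:ℝ) ≤ Real.sqrt (1 + r * x ^ 2) := Real.sqrt_nonneg _
    have key : Real.sqrt (x⁻¹ ^ 2 + r) = Real.sqrt (1 + r * x ^ 2) / x := by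
      have e1 : x⁻¹ ^ 2 + r = (1 + r * x ^ 2) / x ^ 2 := by field_simp
      rw [e1, Real.sqrt_div (by positivity : (0:ℝ) ≤ 1 + r * x ^ 2),
        Real.sqrt_sq hx0.le]
    rw [key, hF]
    have hd : (0:ℝ) < 1 + Real.sqrt (1 + r * x ^ 2) := by linarith
    field_simp
  have heq : ∀ k, a (k + 1) = F (t k) := by
    intro k; rw [ha, hrec, hF]
  have hcomp : Tendsto (fun k => a (k + 1)) atTop (nhds (2 / Real.sqrt r)) := by
    refine (hFlim.comp htT).congr ?_
    intro k; exact (heq k).symm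
  exact (tendsto_add_atTop_iff_nat 1).mp hcomp
end

section
/- Let p ∈ (0,1] and 0 ≤ q ≤ (2-p)². Define t_0 = 1 and t_k = (p + sqrt(q + 4·t_{k-1}²))/2. Then for all k ≥ 1, t_k² - t_k ≤ t_{k-1}². -/
theorem fista_mod_descent (p q : ℝ) (hp0 : 0 < p) (hp1 : p ≤ 1)
    (hq0 : 0 ≤ q) (hq : q ≤ (2 - p) ^ 2) (t : ℕ → ℝ) (ht0 : t 0 = 1)
    (hrec : ∀ k, t (k + 1) = (p + Real.sqrt (q + 4 * (t k) ^ 2)) / 2) :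
    ∀ k, (t (k + 1)) ^ 2 - t (k + 1) ≤ (t k) ^ 2 := by
  have hge : ∀ k, 1 ≤ t k := by
    intro k
    induction k with
    | zero => simp [ht0]
    | succ n ih =>
      rw [hrec n]
      have h4 : (4 : ℝ) ≤ q + 4 * (t n) ^ 2 := by nlinarith
      have : (2 : ℝ) ≤ Real.sqrt (q + 4 * (t n) ^ 2) := by
        have := Real.sqrt_le_sqrt h4
        rwa [show Real.sqrt 4 = 2 by
          rw [show (4:ℝ) = 2^2 by norm_num, Real.sqrt_sq (by norm_num)]] at this
      linarith
  intro k
  have h1 := hge k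
  have h2 := hge (k + 1)
  have hr := hrec k
  have hnn : 0 ≤ q + 4 * (t k) ^ 2 := by nlinarith
  have hs : Real.sqrt (q + 4 * (t k) ^ 2) ^ 2 = q + 4 * (t k) ^ 2 :=
    Real.sq_sqrt hnn
  have hseq : Real.sqrt (q + 4 * (t k) ^ 2) = 2 * t (k + 1) - p := by
    rw [hr]; ring
  rw [hseq] at hs
  nlinarith [sq_nonneg (t (k+1) - 1), sq_nonneg (2 - p)]
end

section
/- Let p ∈ (0,1] and q ≥ 0. Define t_0 = 1 and t_k = (p + sqrt(q + 4·t_{k-1}²))/2. Then for all k ≥ 0, t_k ≥ (k+1)·p/2. -/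
theorem fista_mod_t_lower_bound (p q : ℝ) (hp0 : 0 < p) (hp1 : p ≤ 1)
    (hq : 0 ≤ q) (t : ℕ → ℝ) (ht0 : t 0 = 1)
    (hrec : ∀ k, t (k + 1) = (p + Real.sqrt (q + 4 * (t k) ^ 2)) / 2) :
    ∀ k : ℕ, t k ≥ (k + 1) * p / 2 := by
  intro k
  induction k with
  | zero => rw [ht0]; nlinarith
  | succ n ih =>
    have htn : 0 ≤ t n := by
      have : (0:ℝ) ≤ ((n:ℝ) + 1) * p / 2 := by positivity
      linarith
    have hs : Real.sqrt (q + 4 * (t n) ^ 2) ≥ 2 * t n := by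
      have h2 : (2 * t n) ^ 2 ≤ q + 4 * (t n) ^ 2 := by nlinarith
      calc Real.sqrt (q + 4 * (t n) ^ 2) ≥ Real.sqrt ((2 * t n) ^ 2) :=
            Real.sqrt_le_sqrt h2
        _ = 2 * t n := by rw [Real.sqrt_sq (by linarith)]
    rw [hrec n]
    push_cast
    nlinarith
end

section
/- Let F : ℝⁿ → ℝ be a convex differentiable function whose gradient is L-Lipschitz, R : ℝⁿ → ℝ ∪ {+∞} proper closed convex, Φ = R + F, and γ = 1/L. For any y ∈ ℝⁿ, let x⁺ = prox_{γR}(y - γ∇F(y)). Then for every x ∈ ℝⁿ, Φ(x) - Φ(x⁺) ≥ (L/2)·‖x⁺ - y‖² + L·⟨y - x, x⁺ - y⟩. -/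
open InnerProductSpace

variable {n : ℕ}

lemma line_hasDerivAt (y v : EuclideanSpace ℝ (Fin n)) (t : ℝ) :
    HasDerivAt (fun t : ℝ => t • v + y) v t := by
  simpa using ((hasDerivAt_id t).smul_const v).add_const y

lemma comp_hasDerivAt (F : EuclideanSpace ℝ (Fin n) → ℝ)
    (F' : EuclideanSpace ℝ (Fin n) → EuclideanSpace ℝ (Fin n))
    (hFgrad : ∀ x, HasGradientAt F (F' x) x)
    (y v : EuclideanSpace ℝ (Fin n)) (t : ℝ) :
    HasDerivAt (fun t : ℝ => F (t • v + y)) (inner ℝ (F' (t • v + y)) v : ℝ) t := by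
  have h := ((hFgrad (t • v + y)).hasFDerivAt).comp_hasDerivAt t (line_hasDerivAt y v t)
  exact h

lemma grad_convex_ineq (F : EuclideanSpace ℝ (Fin n) → ℝ)
    (F' : EuclideanSpace ℝ (Fin n) → EuclideanSpace ℝ (Fin n))
    (hFconv : ConvexOn ℝ Set.univ F)
    (hFgrad : ∀ x, HasGradientAt F (F' x) x)
    (y x : EuclideanSpace ℝ (Fin n)) :
    F y + (inner ℝ (F' y) (x - y) : ℝ) ≤ F x := by
  set v := x - y with hv
  have hφconv : ConvexOn ℝ Set.univ (fun t : ℝ => F (t • v + y)) := by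
    have := hFconv.comp_affineMap (AffineMap.lineMap y x)
    have h2 : (fun t : ℝ => F (t • v + y)) = (F ∘ (AffineMap.lineMap y x)) := by
      funext t
      simp only [Function.comp_apply, AffineMap.lineMap_apply_module, hv]
      congr 1
      module
    rw [h2]
    simpa using this
  have hd : HasDerivAt (fun t : ℝ => F (t • v + y)) (inner ℝ (F' y) v : ℝ) 0 := by
    have := comp_hasDerivAt F F' hFgrad y v 0
    simpa using this
  have := hφconv.le_slope_of_hasDerivAt (Set.mem_univ 0) (Set.mem_univ 1) zero_lt_one hd
  rw [slope_def_field] at this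
  simp only [one_smul, zero_smul, zero_add, sub_zero, div_one] at this
  have hx1 : v + y = x := by rw [hv]; abel
  rw [hx1] at this
  linarith

lemma descent_lemma (L : ℝ) (hL : 0 < L) (F : EuclideanSpace ℝ (Fin n) → ℝ)
    (F' : EuclideanSpace ℝ (Fin n) → EuclideanSpace ℝ (Fin n))
    (hFgrad : ∀ x, HasGradientAt F (F' x) x)
    (hFlip : LipschitzWith (Real.toNNReal L) F')
    (y x : EuclideanSpace ℝ (Fin n)) :
    F x ≤ F y + (inner ℝ (F' y) (x - y) : ℝ) + L / 2 * ‖x - y‖ ^ 2 := by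
  set v := x - y with hv
  set ψ : ℝ → ℝ := fun t => F (t • v + y) - t * (inner ℝ (F' y) v : ℝ) - L / 2 * ‖v‖ ^ 2 * t ^ 2
    with hψdef
  have hψd : ∀ t : ℝ, HasDerivAt ψ
      ((inner ℝ (F' (t • v + y)) v : ℝ) - (inner ℝ (F' y) v : ℝ) - L * ‖v‖ ^ 2 * t) t := by
    intro t
    have h1 := comp_hasDerivAt F F' hFgrad y v t
    have h2 : HasDerivAt (fun t : ℝ => t * (inner ℝ (F' y) v : ℝ)) (inner ℝ (F' y) v : ℝ) t := by
      simpa using (hasDerivAt_id t).mul_const (inner ℝ (F' y) v : ℝ)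
    have h3 : HasDerivAt (fun t : ℝ => L / 2 * ‖v‖ ^ 2 * t ^ 2) (L * ‖v‖ ^ 2 * t) t := by
      have := (hasDerivAt_pow 2 t).const_mul (L / 2 * ‖v‖ ^ 2)
      exact this.congr_deriv (by simp only [Nat.cast_ofNat, show (2:ℕ) - 1 = 1 from rfl, pow_one]; ring)
    exact (h1.sub h2).sub h3
  have hanti : AntitoneOn ψ (Set.Icc 0 1) := by
    apply antitoneOn_of_deriv_nonpos (convex_Icc 0 1)
    · exact fun t _ => (hψd t).continuousAt.continuousWithinAt
    · intro t _
      exact ((hψd t).differentiableAt).differentiableWithinAt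
    · intro t ht
      rw [interior_Icc] at ht
      rw [(hψd t).deriv]
      have hlip := hFlip.dist_le_mul (t • v + y) y
      rw [dist_eq_norm, dist_eq_norm] at hlip
      have h4 : t • v + y - y = t • v := by abel
      rw [h4, norm_smul, Real.norm_eq_abs, abs_of_pos ht.1,
        Real.coe_toNNReal L hL.le] at hlip
      have h5 : (inner ℝ (F' (t • v + y)) v : ℝ) - (inner ℝ (F' y) v : ℝ)
          = (inner ℝ (F' (t • v + y) - F' y) v : ℝ) := by
        rw [inner_sub_left]
      have h6 := real_inner_le_norm (F' (t • v + y) - F' y) v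
      have h7 : ‖F' (t • v + y) - F' y‖ * ‖v‖ ≤ L * (t * ‖v‖) * ‖v‖ := by
        apply mul_le_mul_of_nonneg_right hlip (norm_nonneg v)
      nlinarith [norm_nonneg v]
  have := hanti (Set.mem_Icc.2 ⟨le_refl 0, zero_le_one⟩)
    (Set.mem_Icc.2 ⟨zero_le_one, le_refl 1⟩) zero_le_one
  simp only [hψdef, one_smul, zero_smul, zero_add, one_pow, zero_pow, one_mul, zero_mul,
    mul_zero, sub_zero] at this
  have hx1 : v + y = x := by rw [hv]; abel
  rw [hx1] at this
  linarith

open Filter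

/-- FISTA key descent lemma (Beck–Teboulle, Lemma 2.3). `R` is extended
real-valued (proper, never `⊥`, convex, lower semicontinuous), `F` is convex
differentiable with `L`-Lipschitz gradient, `γ = 1/L`, and `x⁺` is
`prox_{γR}(y - γ∇F(y))`, characterized as a minimizer. -/
theorem fista_descent_lemma (n : ℕ) (L : ℝ) (hL : 0 < L)
    (F : EuclideanSpace ℝ (Fin n) → ℝ) (F' : EuclideanSpace ℝ (Fin n) → EuclideanSpace ℝ (Fin n))
    (hFconv : ConvexOn ℝ Set.univ F)
    (hFgrad : ∀ x, HasGradientAt F (F' x) x)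
    (hFlip : LipschitzWith (Real.toNNReal L) F')
    (R : EuclideanSpace ℝ (Fin n) → EReal)
    (hRproper : ∃ x, R x ≠ ⊤) (hRnbot : ∀ x, R x ≠ ⊥)
    (hRconv : ∀ x z : EuclideanSpace ℝ (Fin n), ∀ s u : ℝ, 0 ≤ s → 0 ≤ u → s + u = 1 →
      R (s • x + u • z) ≤ (s : EReal) * R x + (u : EReal) * R z)
    (hRlsc : LowerSemicontinuous R)
    (γ : ℝ) (hγ : γ = 1 / L)
    (y xp : EuclideanSpace ℝ (Fin n))
    (hprox : ∀ x : EuclideanSpace ℝ (Fin n),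
      (((1 : ℝ) / 2 * ‖xp - (y - γ • F' y)‖ ^ 2 : ℝ) : EReal) + (γ : EReal) * R xp ≤
        (((1 : ℝ) / 2 * ‖x - (y - γ • F' y)‖ ^ 2 : ℝ) : EReal) + (γ : EReal) * R x) :
    ∀ x : EuclideanSpace ℝ (Fin n),
      ((L / 2 * ‖xp - y‖ ^ 2 + L * (inner ℝ (y - x) (xp - y) : ℝ) : ℝ) : EReal) +
          (R xp + (F xp : EReal)) ≤ R x + (F x : EReal) := by
  intro x
  have hγpos : 0 < γ := by rw [hγ]; positivity
  obtain ⟨x₀, hx₀⟩ := hRproper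
  obtain ⟨r₀, hr₀⟩ : ∃ r : ℝ, R x₀ = (r : EReal) :=
    ⟨(R x₀).toReal, (EReal.coe_toReal hx₀ (hRnbot x₀)).symm⟩
  have hxp_ne_top : R xp ≠ ⊤ := by
    intro htop
    have h := hprox x₀
    rw [htop, hr₀, EReal.coe_mul_top_of_pos (by exact_mod_cast hγpos), EReal.coe_add_top,
      ← EReal.coe_mul, ← EReal.coe_add] at h
    exact EReal.coe_ne_top _ (top_le_iff.1 h)
  obtain ⟨a, ha⟩ : ∃ r : ℝ, R xp = (r : EReal) :=
    ⟨(R xp).toReal, (EReal.coe_toReal hxp_ne_top (hRnbot xp)).symm⟩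
  by_cases hxtop : R x = ⊤
  · rw [hxtop, EReal.top_add_coe]
    exact le_top
  obtain ⟨b, hb⟩ : ∃ r : ℝ, R x = (r : EReal) :=
    ⟨(R x).toReal, (EReal.coe_toReal hxtop (hRnbot x)).symm⟩
  -- key prox inequality
  have hstep : ∀ t : ℝ, t ∈ Set.Ioc (0:ℝ) 1 →
      (inner ℝ (y - γ • F' y - xp) (x - xp) : ℝ) ≤ γ * (b - a) + t / 2 * ‖x - xp‖ ^ 2 := by
    intro t ht
    have hconv := hRconv xp x (1 - t) t (by linarith [ht.2]) ht.1.le (by ring)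
    rw [ha, hb, ← EReal.coe_mul, ← EReal.coe_mul, ← EReal.coe_add] at hconv
    have hprt := hprox ((1 - t) • xp + t • x)
    rw [ha] at hprt
    have h2 : (γ : EReal) * R ((1 - t) • xp + t • x) ≤
        ((γ * ((1 - t) * a + t * b) : ℝ) : EReal) := by
      rw [EReal.coe_mul]
      exact mul_le_mul_of_nonneg_left hconv (by exact_mod_cast hγpos.le)
    have h3 : (((1 : ℝ) / 2 * ‖xp - (y - γ • F' y)‖ ^ 2 : ℝ) : EReal) + ((γ * a : ℝ) : EReal) ≤
        (((1 : ℝ) / 2 * ‖(1 - t) • xp + t • x - (y - γ • F' y)‖ ^ 2 : ℝ) : EReal) +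
          ((γ * ((1 - t) * a + t * b) : ℝ) : EReal) := by
      rw [EReal.coe_mul]
      exact le_trans hprt (add_le_add_right h2 _)
    rw [← EReal.coe_add, ← EReal.coe_add, EReal.coe_le_coe_iff] at h3
    have hxt : (1 - t) • xp + t • x - (y - γ • F' y)
        = (xp - (y - γ • F' y)) + t • (x - xp) := by module
    rw [hxt, norm_add_sq_real, real_inner_smul_right, norm_smul, Real.norm_eq_abs,
      abs_of_pos ht.1, mul_pow] at h3
    have hinner : (inner ℝ (y - γ • F' y - xp) (x - xp) : ℝ)
        = -(inner ℝ (xp - (y - γ • F' y)) (x - xp) : ℝ) := by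
      rw [← inner_neg_left]
      congr 1
      module
    rw [hinner]
    nlinarith [ht.1, sq_nonneg ‖x - xp‖, mul_pos ht.1 ht.1]
  have hkey : (inner ℝ (y - γ • F' y - xp) (x - xp) : ℝ) ≤ γ * (b - a) := by
    by_contra hcon
    push_neg at hcon
    set ε : ℝ := (inner ℝ (y - γ • F' y - xp) (x - xp) : ℝ) - γ * (b - a) with hε
    have hεpos : 0 < ε := sub_pos.2 hcon
    set t : ℝ := min 1 (ε / (‖x - xp‖ ^ 2 + 1)) with htdef
    have htpos : 0 < t := lt_min one_pos (by positivity)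
    have ht1 : t ≤ 1 := min_le_left _ _
    have ht2 : t ≤ ε / (‖x - xp‖ ^ 2 + 1) := min_le_right _ _
    have h := hstep t ⟨htpos, ht1⟩
    have h5 : (0:ℝ) < ‖x - xp‖ ^ 2 + 1 := by positivity
    have h6 : t * (‖x - xp‖ ^ 2 + 1) ≤ ε := (le_div_iff₀ h5).1 ht2
    have hd : t / 2 * ‖x - xp‖ ^ 2 < ε := by nlinarith [htpos, sq_nonneg ‖x - xp‖]
    rw [hε] at hd
    linarith
  -- pass to reals
  rw [ha, hb, ← EReal.coe_add, ← EReal.coe_add, ← EReal.coe_add, EReal.coe_le_coe_iff]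
  have hA := grad_convex_ineq F F' hFconv hFgrad y x
  have hB := descent_lemma L hL F F' hFgrad hFlip y xp
  have e1 : (inner ℝ (F' y) (x - y) : ℝ)
      = (inner ℝ (F' y) (x - xp) : ℝ) + (inner ℝ (F' y) (xp - y) : ℝ) := by
    rw [← inner_add_right]
    congr 1
    module
  have e2 : (inner ℝ (y - γ • F' y - xp) (x - xp) : ℝ)
      = -(γ * (inner ℝ (F' y) (x - xp) : ℝ)) - (inner ℝ (xp - y) (x - xp) : ℝ) := by
    have hsplit : y - γ • F' y - xp = -(γ • F' y) + -(xp - y) := by module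
    rw [hsplit, inner_add_left, inner_neg_left, inner_neg_left, real_inner_smul_left]
    ring
  have e3 : (inner ℝ (y - x) (xp - y) : ℝ)
      = -(inner ℝ (xp - y) (x - xp) : ℝ) - ‖xp - y‖ ^ 2 := by
    have hzero : (y - x) + (x - xp) + (xp - y) = (0 : EuclideanSpace ℝ (Fin n)) := by module
    have h0 : (inner ℝ (xp - y) ((y - x) + (x - xp) + (xp - y)) : ℝ) = 0 := by
      rw [hzero, inner_zero_right]
    rw [inner_add_right, inner_add_right, real_inner_self_eq_norm_sq] at h0
    have hcomm := real_inner_comm (y - x) (xp - y)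
    linarith
  rw [e2] at hkey
  have hkey2 : -(inner ℝ (F' y) (x - xp) : ℝ) - L * (inner ℝ (xp - y) (x - xp) : ℝ) ≤ b - a := by
    have h := mul_le_mul_of_nonneg_left hkey hL.le
    calc -(inner ℝ (F' y) (x - xp) : ℝ) - L * (inner ℝ (xp - y) (x - xp) : ℝ)
        = L * (-(γ * (inner ℝ (F' y) (x - xp) : ℝ)) - (inner ℝ (xp - y) (x - xp) : ℝ)) := by
          rw [hγ]; field_simp; try ring
      _ ≤ L * (γ * (b - a)) := h
      _ = b - a := by
          rw [hγ]
          field_simp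
  rw [e1] at hA
  have e3' : L * (inner ℝ (y - x) (xp - y) : ℝ)
      = -(L * (inner ℝ (xp - y) (x - xp) : ℝ)) - L * ‖xp - y‖ ^ 2 := by rw [e3]; ring
  linarith [hA, hB, hkey2, e3']
end
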